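/- Let f : R → R' be a homomorphism of commutative rings such that every element r' ∈ R' can be written r' = u·f(r) with u ∈ R' invertible and r ∈ R. Let S' ⊆ R' be a countable multiplicative subset. Then there exists a countable multiplicative subset S ⊆ R such that R' ⊗_R S⁻¹R ≅ S'⁻¹R' as R'-algebras. -/

import Mathlib

universe u

lemma countable_submonoid_closure {M : Type*} [Monoid M] {s : Set M} (hs : s.Countable) :
    Countable (Submonoid.closure s) := by
  haveI := hs.to_subtype
  have hsub : (Submonoid.closure s : Set M) ⊆
      Set.range (fun l : List s => (l.map (fun y : s => (y : M))).prod) := by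
    intro x hx
    obtain ⟨l, hl, rfl⟩ := Submonoid.exists_list_of_mem_closure hx
    refine ⟨l.attach.map fun y => ⟨y.1, hl y.1 y.2⟩, ?_⟩
    simp [List.map_map, Function.comp]
  exact ((Set.countable_range _).mono hsub).to_subtype

/-- Let `f : R → R'` be a ring homomorphism such that every element of `R'` is a unit
multiple of an element in the image of `f`. Then for every countable multiplicative
subset `S' ⊆ R'` there is a countable multiplicative subset `S ⊆ R` with
`R' ⊗_R S⁻¹R ≅ S'⁻¹R'` as `R'`-algebras. -/
theorem stmt16 (R R' : Type u) [CommRing R] [CommRing R'] (f : R →+* R')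
    (hf : ∀ r' : R', ∃ (u : R'ˣ) (r : R), r' = (u : R') * f r)
    (S' : Submonoid R') (hS' : Countable S') :
    letI : Algebra R R' := f.toAlgebra
    ∃ S : Submonoid R, Countable S ∧
      Nonempty ((TensorProduct R R' (Localization S)) ≃ₐ[R'] Localization S') := by
  letI : Algebra R R' := f.toAlgebra
  -- choose for each s' ∈ S' a unit u and r ∈ R with s' = u * f r
  choose u g hg using fun s' : S' => hf (s' : R')
  set T : Set R := Set.range g with hT
  set S : Submonoid R := Submonoid.closure T with hS
  refine ⟨S, countable_submonoid_closure (Set.countable_range g), ?_⟩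
  set M : Submonoid R' := Algebra.algebraMapSubmonoid R' S with hM
  have hfg : ∀ t : S', f (g t) = ((u t)⁻¹ : R'ˣ) * (t : R') := by
    intro t
    rw [hg t, ← mul_assoc]
    simp
  -- every element of M becomes a unit in Localization S'
  have hunit : ∀ r ∈ S, IsUnit (algebraMap R' (Localization S') (f r)) := by
    intro r hr
    induction hr using Submonoid.closure_induction with
    | mem x hx =>
      obtain ⟨s', rfl⟩ := hx
      rw [hfg s', map_mul]
      exact ((u s')⁻¹.isUnit.map (algebraMap R' (Localization S'))).mul
        (IsLocalization.map_units (Localization S') (⟨(s' : R'), s'.2⟩ : S'))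
    | one => simp
    | mul x y _ _ hx hy => rw [map_mul, map_mul]; exact hx.mul hy
  have hloc : IsLocalization M (Localization S') := by
    constructor
    constructor
    · rintro ⟨y, hy⟩
      obtain ⟨r, hr, rfl⟩ := hy
      exact hunit r hr
    · intro z
      obtain ⟨⟨x, s'⟩, hz⟩ := IsLocalization.surj S' z
      dsimp only at hz
      refine ⟨⟨((u s')⁻¹ : R'ˣ) * x, ⟨f (g s'),
        ⟨g s', Submonoid.subset_closure ⟨s', rfl⟩, rfl⟩⟩⟩, ?_⟩
      dsimp only
      rw [hfg s', map_mul, map_mul, mul_comm ((algebraMap R' (Localization S')) _),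
        ← mul_assoc, hz, mul_comm]
    · intro a b hab
      obtain ⟨c, hc⟩ := (IsLocalization.eq_iff_exists S' (Localization S')).mp hab
      refine ⟨⟨f (g c), ⟨g c, Submonoid.subset_closure ⟨c, rfl⟩, rfl⟩⟩, ?_⟩
      dsimp only
      rw [hfg c, mul_assoc, mul_assoc, hc]
  -- the tensor product is also a localization at M
  letI : Algebra (Localization S) (TensorProduct R R' (Localization S)) :=
    Algebra.TensorProduct.rightAlgebra
  have htensor : IsLocalization M (TensorProduct R R' (Localization S)) := by
    rw [hM, ← isLocalizedModule_iff_isLocalization, isLocalizedModule_iff_isBaseChange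
      (S := S) (A := Localization S)]
    exact Algebra.IsPushout.out
  haveI := htensor
  haveI := hloc
  exact ⟨IsLocalization.algEquiv M (TensorProduct R R' (Localization S)) (Localization S')⟩
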